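/- Let m, n ∈ ℕ with 1 ≤ m < n and Q = 1/(2n) + 1/(2m). The function (u₂,u₃) ↦ (u₂^{2n} + u₃^{2m})^{z-Q} is locally integrable on ℝ² whenever Re z > 0. -/

import Mathlib

open MeasureTheory Set Real

/-- Integrability of `|x| ^ c` on `(-R, R)` for `c > -1`. -/
lemma aux_abs_rpow {c : ℝ} (hc : -1 < c) {R : ℝ} (hR : 0 < R) :
    IntegrableOn (fun x : ℝ => |x| ^ c) (Ioo (-R) R) volume := by
  have hpos : IntegrableOn (fun x : ℝ => |x| ^ c) (Ioo 0 R) volume := by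
    refine ((intervalIntegral.integrableOn_Ioo_rpow_iff hR).2 hc).congr_fun (fun x hx => ?_) measurableSet_Ioo
    rw [abs_of_pos hx.1]
  have hneg : IntegrableOn (fun x : ℝ => |x| ^ c) (Ioo (-R) 0) volume := by
    have h := ((Measure.measurePreserving_neg (volume : Measure ℝ)).integrableOn_comp_preimage
      (Homeomorph.neg ℝ).measurableEmbedding (f := fun x : ℝ => |x| ^ c) (s := Ioo 0 R)).2 hpos
    have hset : (Neg.neg : ℝ → ℝ) ⁻¹' (Ioo 0 R) = Ioo (-R) 0 := by
      ext x
      simp only [mem_preimage, mem_Ioo]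
      show 0 < -x ∧ -x < R ↔ _
      constructor
      · rintro ⟨h1, h2⟩; constructor <;> linarith
      · rintro ⟨h1, h2⟩; constructor <;> linarith
    rw [hset] at h
    refine h.congr_fun (fun x _ => ?_) measurableSet_Ioo
    simp [Function.comp, abs_neg]
  have hsubset : (Ioo (-R) R : Set ℝ) =ᵐ[volume] ((Ioo (-R) 0 ∪ Ioo 0 R : Set ℝ)) := by
    have hseq : Ioo (-R) 0 ∪ Ioo 0 R = Ioo (-R) R \ {0} := by
      ext x
      simp only [mem_union, mem_Ioo, mem_diff, mem_singleton_iff]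
      constructor
      · rintro (⟨h1, h2⟩ | ⟨h1, h2⟩) <;>
          refine ⟨⟨by linarith, by linarith⟩, by intro h; subst h; linarith⟩
      · rintro ⟨⟨h1, h2⟩, h3⟩
        rcases lt_or_gt_of_ne h3 with h | h
        · exact Or.inl ⟨h1, h⟩
        · exact Or.inr ⟨h, h2⟩
    rw [hseq]
    have h0 : volume (Ioo (-R) R ∩ ({0} : Set ℝ)) = 0 :=
      measure_mono_null inter_subset_right Real.volume_singleton
    exact ((diff_ae_eq_self (μ := volume) (s := Ioo (-R) R) (t := ({0} : Set ℝ))).2 h0).symm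
  exact (hneg.union hpos).congr_set_ae hsubset

/-- AM-GM-type bound: `x ^ θ * y ^ (1-θ) ≤ x + y`. -/
lemma aux_amgm {x y θ : ℝ} (hx : 0 ≤ x) (hy : 0 ≤ y) (h0 : 0 ≤ θ) (h1 : θ ≤ 1) :
    x ^ θ * y ^ (1 - θ) ≤ x + y := by
  have hm : 0 ≤ max x y := le_max_of_le_left hx
  calc x ^ θ * y ^ (1 - θ)
      ≤ (max x y) ^ θ * (max x y) ^ (1 - θ) :=
        mul_le_mul (Real.rpow_le_rpow hx (le_max_left _ _) h0)
          (Real.rpow_le_rpow hy (le_max_right _ _) (by linarith))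
          (Real.rpow_nonneg hy _) (Real.rpow_nonneg hm _)
    _ = (max x y) ^ (θ + (1 - θ)) := (Real.rpow_add' hm (by norm_num)).symm
    _ = max x y := by norm_num
    _ ≤ x + y := max_le_add_of_nonneg hx hy

/-- For `1 ≤ m < n`, `Q = 1/(2n) + 1/(2m)`, and `Re z > 0`, the function
`u ↦ (u₂^(2n) + u₃^(2m))^(z-Q)` is locally integrable on `ℝ²`. -/
theorem stmt_3 (m n : ℕ) (hm : 1 ≤ m) (hmn : m < n) (Q : ℝ)
    (hQ : Q = 1 / (2 * n) + 1 / (2 * m)) (z : ℂ) (hz : 0 < z.re) :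
    MeasureTheory.LocallyIntegrable
      (fun u : ℝ × ℝ => ((u.1 ^ (2 * n) + u.2 ^ (2 * m) : ℝ) : ℂ) ^ (z - (Q : ℂ)))
      MeasureTheory.volume := by
  set f : ℝ × ℝ → ℂ :=
    fun u : ℝ × ℝ => ((u.1 ^ (2 * n) + u.2 ^ (2 * m) : ℝ) : ℂ) ^ (z - (Q : ℂ)) with hf
  set ρ : ℝ × ℝ → ℝ := fun u => u.1 ^ (2 * n) + u.2 ^ (2 * m) with hρdef
  have hn : 1 ≤ n := le_of_lt (lt_of_le_of_lt hm hmn)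
  have hmR : (1 : ℝ) ≤ (m : ℝ) := by exact_mod_cast hm
  have hnR : (1 : ℝ) ≤ (n : ℝ) := by exact_mod_cast hn
  have hmpos : (0 : ℝ) < (m : ℝ) := by linarith
  have hnpos : (0 : ℝ) < (n : ℝ) := by linarith
  have hQpos : 0 < Q := by rw [hQ]; positivity
  have hρ_nonneg : ∀ u : ℝ × ℝ, 0 ≤ ρ u := fun u =>
    add_nonneg ((even_two_mul n).pow_nonneg _) ((even_two_mul m).pow_nonneg _)
  set a : ℝ := z.re - Q with ha_def
  have ha_re : (z - (Q : ℂ)).re = a := by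
    simp [Complex.sub_re, Complex.ofReal_re, ha_def]
  have ha_gt : -Q < a := by simp only [ha_def]; linarith
  -- pointwise norm bound
  have hbound : ∀ u : ℝ × ℝ, ‖f u‖ ≤ ρ u ^ a := by
    intro u
    have h0 : 0 ≤ ρ u := hρ_nonneg u
    have h := Complex.norm_cpow_le ((ρ u : ℝ) : ℂ) (z - (Q : ℂ))
    rw [Complex.arg_ofReal_of_nonneg h0] at h
    simpa [Complex.norm_real, Real.norm_eq_abs, abs_of_nonneg h0, ha_re] using h
  -- measurability
  have hmeas : Measurable f := by
    apply measurable_of_continuousOn_compl_singleton ((0, 0) : ℝ × ℝ)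
    apply continuousOn_of_forall_continuousAt
    intro u hu
    have hρne : ρ u ≠ 0 := by
      intro h0
      have h1 : (0 : ℝ) ≤ u.1 ^ (2 * n) := (even_two_mul n).pow_nonneg _
      have h2 : (0 : ℝ) ≤ u.2 ^ (2 * m) := (even_two_mul m).pow_nonneg _
      have e1 : u.1 ^ (2 * n) = 0 := by dsimp only [ρ] at h0; linarith
      have e2 : u.2 ^ (2 * m) = 0 := by dsimp only [ρ] at h0; linarith
      have hu1 : u.1 = 0 := pow_eq_zero_iff (by omega : 2 * n ≠ 0) |>.1 e1
      have hu2 : u.2 = 0 := pow_eq_zero_iff (by omega : 2 * m ≠ 0) |>.1 e2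
      exact hu (by simp [Prod.ext_iff, hu1, hu2])
    have hcont : Continuous ρ := (continuous_fst.pow _).add (continuous_snd.pow _)
    exact (Complex.continuousAt_ofReal_cpow_const _ _ (Or.inr hρne)).comp hcont.continuousAt
  rw [MeasureTheory.locallyIntegrable_iff]
  intro k hk
  obtain ⟨R, hR0, hkR⟩ : ∃ R : ℝ, 0 < R ∧ k ⊆ Metric.ball ((0, 0) : ℝ × ℝ) R :=
    hk.isBounded.subset_ball_lt 0 _
  have hball : Metric.ball ((0, 0) : ℝ × ℝ) R = Ioo (-R) R ×ˢ Ioo (-R) R := by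
    rw [← ball_prod_same, Real.ball_eq_Ioo]
    norm_num
  refine MeasureTheory.IntegrableOn.mono_set ?_ (hkR.trans_eq hball)
  -- now prove integrability on the open square
  rcases le_or_gt 0 a with hge | hlt
  · -- bounded case
    apply Measure.integrableOn_of_bounded (M := (R ^ (2 * n) + R ^ (2 * m)) ^ a)
    · exact ne_of_lt ((Metric.isBounded_Ioo _ _ |>.prod (Metric.isBounded_Ioo _ _)).measure_lt_top)
    · exact hmeas.aestronglyMeasurable
    · filter_upwards [ae_restrict_mem (measurableSet_Ioo.prod measurableSet_Ioo)] with u hu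
      obtain ⟨hu1, hu2⟩ := hu
      have hb1 : |u.1| ≤ R := le_of_lt (abs_lt.2 ⟨hu1.1, hu1.2⟩)
      have hb2 : |u.2| ≤ R := le_of_lt (abs_lt.2 ⟨hu2.1, hu2.2⟩)
      have hρle : ρ u ≤ R ^ (2 * n) + R ^ (2 * m) := by
        have e1 : u.1 ^ (2 * n) ≤ R ^ (2 * n) := by
          calc u.1 ^ (2 * n) = |u.1| ^ (2 * n) := ((even_two_mul n).pow_abs _).symm
            _ ≤ R ^ (2 * n) := pow_le_pow_left₀ (abs_nonneg _) hb1 _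
        have e2 : u.2 ^ (2 * m) ≤ R ^ (2 * m) := by
          calc u.2 ^ (2 * m) = |u.2| ^ (2 * m) := ((even_two_mul m).pow_abs _).symm
            _ ≤ R ^ (2 * m) := pow_le_pow_left₀ (abs_nonneg _) hb2 _
        dsimp only [ρ]; linarith
      exact (hbound u).trans (Real.rpow_le_rpow (hρ_nonneg u) hρle hge)
  · -- singular case: -Q < a < 0
    set b : ℝ := -a with hb_def
    have hb_pos : 0 < b := by simp only [hb_def]; linarith
    have hb_lt : b < Q := by simp only [hb_def]; linarith
    set θ : ℝ := 1 / (2 * (n : ℝ) * Q) with hθ_def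
    set c : ℝ := b / Q with hc_def
    have hc_pos : 0 < c := div_pos hb_pos hQpos
    have hc_lt : c < 1 := (div_lt_one hQpos).2 hb_lt
    have hθ0 : 0 ≤ θ := by positivity
    have hθ1 : θ ≤ 1 := by
      rw [hθ_def, div_le_one (by positivity)]
      have h1 : 1 / (2 * (n : ℝ)) ≤ Q := by
        rw [hQ]
        have : (0:ℝ) ≤ 1 / (2 * (m : ℝ)) := by positivity
        linarith
      calc (1 : ℝ) = 2 * (n : ℝ) * (1 / (2 * (n : ℝ))) := by field_simp
        _ ≤ 2 * (n : ℝ) * Q := by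
            apply mul_le_mul_of_nonneg_left h1 (by positivity)
    -- the dominating function is integrable
    have hg : IntegrableOn (fun u : ℝ × ℝ => |u.1| ^ (-c) * |u.2| ^ (-c))
        (Ioo (-R) R ×ˢ Ioo (-R) R) volume := by
      rw [IntegrableOn, Measure.volume_eq_prod, ← Measure.prod_restrict]
      exact Integrable.mul_prod (aux_abs_rpow (by linarith) hR0) (aux_abs_rpow (by linarith) hR0)
    refine hg.mono' hmeas.aestronglyMeasurable.restrict ?_
    -- a.e. bound
    have hae1 : ∀ᵐ u : ℝ × ℝ ∂volume, u.1 ≠ 0 := by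
      rw [ae_iff]
      have hset : {u : ℝ × ℝ | ¬u.1 ≠ 0} = ({0} : Set ℝ) ×ˢ (univ : Set ℝ) := by
        ext u; simp [Prod.ext_iff, eq_comm]
      rw [hset, Measure.volume_eq_prod, Measure.prod_prod, Real.volume_singleton, zero_mul]
    have hae2 : ∀ᵐ u : ℝ × ℝ ∂volume, u.2 ≠ 0 := by
      rw [ae_iff]
      have hset : {u : ℝ × ℝ | ¬u.2 ≠ 0} = (univ : Set ℝ) ×ˢ ({0} : Set ℝ) := by
        ext u; simp [Prod.ext_iff, eq_comm]
      rw [hset, Measure.volume_eq_prod, Measure.prod_prod, Real.volume_singleton, mul_zero]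
    filter_upwards [ae_restrict_of_ae hae1, ae_restrict_of_ae hae2] with u h1 h2
    have hx1 : 0 < |u.1| := abs_pos.2 h1
    have hx2 : 0 < |u.2| := abs_pos.2 h2
    -- AM-GM lower bound on ρ
    have e1 : ((u.1 ^ (2 * n) : ℝ)) ^ θ = |u.1| ^ ((2 * (n : ℝ)) * θ) := by
      rw [← (even_two_mul n).pow_abs u.1, ← Real.rpow_natCast |u.1| (2 * n),
        ← Real.rpow_mul (abs_nonneg _)]
      congr 1
      push_cast
      ring
    have e2 : ((u.2 ^ (2 * m) : ℝ)) ^ (1 - θ) = |u.2| ^ ((2 * (m : ℝ)) * (1 - θ)) := by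
      rw [← (even_two_mul m).pow_abs u.2, ← Real.rpow_natCast |u.2| (2 * m),
        ← Real.rpow_mul (abs_nonneg _)]
      congr 1
      push_cast
      ring
    have hle : |u.1| ^ ((2 * (n : ℝ)) * θ) * |u.2| ^ ((2 * (m : ℝ)) * (1 - θ)) ≤ ρ u := by
      rw [← e1, ← e2]
      exact aux_amgm ((even_two_mul n).pow_nonneg _) ((even_two_mul m).pow_nonneg _) hθ0 hθ1
    have hXpos : 0 < |u.1| ^ ((2 * (n : ℝ)) * θ) * |u.2| ^ ((2 * (m : ℝ)) * (1 - θ)) := by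
      positivity
    have hstep : ρ u ^ a ≤
        (|u.1| ^ ((2 * (n : ℝ)) * θ) * |u.2| ^ ((2 * (m : ℝ)) * (1 - θ))) ^ a :=
      Real.rpow_le_rpow_of_nonpos hXpos hle (by linarith)
    have hcalc : (|u.1| ^ ((2 * (n : ℝ)) * θ) * |u.2| ^ ((2 * (m : ℝ)) * (1 - θ))) ^ a
        = |u.1| ^ (-c) * |u.2| ^ (-c) := by
      rw [Real.mul_rpow (Real.rpow_nonneg (abs_nonneg _) _) (Real.rpow_nonneg (abs_nonneg _) _),
        ← Real.rpow_mul (abs_nonneg _), ← Real.rpow_mul (abs_nonneg _)]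
      have hQne : Q ≠ 0 := ne_of_gt hQpos
      have hexp1 : (2 * (n : ℝ)) * θ * a = -c := by
        rw [hθ_def, hc_def, hb_def]
        field_simp
      have hexp2 : (2 * (m : ℝ)) * (1 - θ) * a = -c := by
        rw [hθ_def, hc_def, hb_def, hQ]
        have hm0 : (m : ℝ) ≠ 0 := ne_of_gt hmpos
        have hn0 : (n : ℝ) ≠ 0 := ne_of_gt hnpos
        have hQne' : 1 / (2 * (n:ℝ)) + 1 / (2 * (m:ℝ)) ≠ 0 := by rw [← hQ]; exact hQne
        field_simp
        ring
      rw [hexp1, hexp2]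
    calc ‖f u‖ ≤ ρ u ^ a := hbound u
      _ ≤ _ := hstep
      _ = _ := hcalc
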